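/- Under Assumptions (A1) and (A2), fix y_t ∈ Y and a vector g̃_t with ‖g̃_t‖ ≤ G̃_F, and let Y_t = {y ∈ Y : ‖y − y_t‖₂ ≤ 2η G̃_F} and Φ_t(y) = ⟨g̃_t, y − y_t⟩ + (1/(2η)) (y − y_t)ᵀ ∇²R(y_t) (y − y_t). Then the mirror-descent iterate y_{t+1} = argmin_{y∈Y} { ⟨g̃_t, y − y_t⟩ + (1/η) D_R(y‖y_t) } satisfies y_{t+1} = argmin_{y∈Y_t} { Φ_t(y) + (1/η) ε_t(y) }, where ε_t(y) := D_R(y‖y_t) − (1/2)(y − y_t)ᵀ∇²R(y_t)(y − y_t); moreover |ε_t(y)| ≤ (4/3) G G̃_F³ η³ for all y ∈ Y_t. -/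

import Mathlib

open scoped RealInnerProductSpace

/-- Bregman divergence `D_R(x ‖ y) = R x - R y - ⟪∇R y, x - y⟫`. -/
noncomputable def bregman {E : Type*} [NormedAddCommGroup E] [InnerProductSpace ℝ E]
    [CompleteSpace E] (R : E → ℝ) (x y : E) : ℝ :=
  R x - R y - ⟪gradient R y, x - y⟫

section taylorAux

open Set

/-- Fencing step for a scalar function on `[0,1]` with a bounded right derivative. -/
private lemma fence_aux (u u' B B' : ℝ → ℝ)
    (hu : ∀ s ∈ Icc (0:ℝ) 1, HasDerivWithinAt u (u' s) (Icc 0 1) s)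
    (hu0 : u 0 = 0) (hB0 : B 0 = 0)
    (hB : ∀ x : ℝ, HasDerivAt B (B' x) x)
    (hbd : ∀ s ∈ Icc (0:ℝ) 1, |u' s| ≤ B' s) :
    ∀ s ∈ Icc (0:ℝ) 1, |u s| ≤ B s := by
  have hcont : ContinuousOn u (Icc 0 1) := fun s hs => (hu s hs).continuousWithinAt
  have hu' : ∀ s ∈ Ico (0:ℝ) 1, HasDerivWithinAt u (u' s) (Ici s) s := by
    intro s hs
    exact ((hu s (Ico_subset_Icc_self hs)).mono (Icc_subset_Icc_left hs.1)).mono_of_mem_nhdsWithin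
      (Icc_mem_nhdsGE_of_mem ⟨le_rfl, hs.2⟩)
  intro s hs
  have := image_norm_le_of_norm_deriv_right_le_deriv_boundary hcont hu'
    (by simp [hu0, hB0]) hB (fun x hx => by simpa using hbd x (Ico_subset_Icc_self hx)) hs
  simpa using this

/-- Second-order Taylor remainder bound on `[0,1]` from a bound on the third derivative. -/
private lemma taylor2_aux (f g g' g'' : ℝ → ℝ) (M : ℝ)
    (hf : ∀ s ∈ Icc (0:ℝ) 1, HasDerivWithinAt f (g s) (Icc 0 1) s)
    (hg : ∀ s ∈ Icc (0:ℝ) 1, HasDerivWithinAt g (g' s) (Icc 0 1) s)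
    (hg' : ∀ s ∈ Icc (0:ℝ) 1, HasDerivWithinAt g' (g'' s) (Icc 0 1) s)
    (hbd : ∀ s ∈ Icc (0:ℝ) 1, |g'' s| ≤ M) :
    |f 1 - f 0 - g 0 - g' 0 / 2| ≤ M / 6 := by
  have step1 : ∀ s ∈ Icc (0:ℝ) 1, |g' s - g' 0| ≤ M * s := by
    refine fence_aux (fun s => g' s - g' 0) g'' (fun s => M * s) (fun _ => M)
      (fun s hs => (hg' s hs).sub_const _) (by ring) (by ring)
      (fun x => by simpa using (hasDerivAt_id x).const_mul M) hbd
  have step2 : ∀ s ∈ Icc (0:ℝ) 1, |g s - g 0 - g' 0 * s| ≤ M / 2 * s ^ 2 := by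
    refine fence_aux (fun s => g s - g 0 - g' 0 * s) (fun s => g' s - g' 0)
      (fun s => M / 2 * s ^ 2) (fun s => M * s)
      (fun s hs => by
        have h2 : HasDerivWithinAt (fun t : ℝ => g' 0 * t) (g' 0) (Icc 0 1) s := by
          simpa using (((hasDerivAt_id s).const_mul (g' 0)).hasDerivWithinAt (s := Icc 0 1))
        exact ((hg s hs).sub_const _).sub h2)
      (by ring) (by ring)
      (fun x => by
        have h := (hasDerivAt_pow 2 x).const_mul (M / 2)
        convert h using 1 <;> try rfl
        push_cast; ring) step1
  have step3 : ∀ s ∈ Icc (0:ℝ) 1,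
      |f s - f 0 - g 0 * s - g' 0 / 2 * s ^ 2| ≤ M / 6 * s ^ 3 := by
    refine fence_aux (fun s => f s - f 0 - g 0 * s - g' 0 / 2 * s ^ 2)
      (fun s => g s - g 0 - g' 0 * s) (fun s => M / 6 * s ^ 3) (fun s => M / 2 * s ^ 2)
      (fun s hs => by
        have h2 : HasDerivWithinAt (fun t : ℝ => g 0 * t) (g 0) (Icc 0 1) s := by
          simpa using (((hasDerivAt_id s).const_mul (g 0)).hasDerivWithinAt (s := Icc 0 1))
        have h3 : HasDerivWithinAt (fun t : ℝ => g' 0 / 2 * t ^ 2) (g' 0 * s) (Icc 0 1) s := by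
          have h := ((hasDerivAt_pow 2 s).const_mul (g' 0 / 2)).hasDerivWithinAt (s := Icc 0 1)
          convert h using 1 <;> try rfl
          push_cast; ring
        exact (((hf s hs).sub_const _).sub h2).sub h3)
      (by ring) (by ring)
      (fun x => by
        have h := (hasDerivAt_pow 3 x).const_mul (M / 6)
        convert h using 1 <;> try rfl
        push_cast; ring) step2
  have h1 := step3 1 (by norm_num)
  have e : f 1 - f 0 - g 0 * 1 - g' 0 / 2 * 1 ^ 2 = f 1 - f 0 - g 0 - g' 0 / 2 := by ring
  rw [e] at h1
  simpa using h1

end taylorAux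

set_option maxHeartbeats 1000000 in
/-- the OMD iterate is a minimizer of the local quadratic model `Φ_t`
perturbed by the Taylor remainder `ε_t`, localized to the set `Y_t`, and the remainder is
of size `O(η³)` on `Y_t`. -/
theorem omd_rewritten_local_model
    {d : ℕ} (Y : Set (EuclideanSpace ℝ (Fin d)))
    (hYne : Y.Nonempty) (hYcv : Convex ℝ Y) (hYcp : IsCompact Y)
    (R : EuclideanSpace ℝ (Fin d) → ℝ)
    (HR : EuclideanSpace ℝ (Fin d) →
      EuclideanSpace ℝ (Fin d) →L[ℝ] EuclideanSpace ℝ (Fin d))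
    (hHR : ∀ z ∈ Y, HasFDerivAt (gradient R) (HR z) z)
    (G : ℝ) (hG : 1 < G)
    (hRsc : ∀ x ∈ Y, ∀ y ∈ Y, (1 / 2) * ‖x - y‖ ^ 2 ≤ bregman R x y)
    (hgradRbd : ∀ z ∈ Y, ‖gradient R z‖ ≤ G)
    (T3 : EuclideanSpace ℝ (Fin d) →
      EuclideanSpace ℝ (Fin d) →L[ℝ] EuclideanSpace ℝ (Fin d) →L[ℝ] EuclideanSpace ℝ (Fin d))
    (hT3 : ∀ z ∈ Y, HasFDerivAt HR (T3 z) z) (hT3bd : ∀ z ∈ Y, ‖T3 z‖ ≤ G)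
    (η GtF : ℝ) (hη : 0 < η) (hGtF : 0 < GtF)
    (yt : EuclideanSpace ℝ (Fin d)) (hyt : yt ∈ Y)
    (gtil : EuclideanSpace ℝ (Fin d)) (hgtil : ‖gtil‖ ≤ GtF)
    (yt1 : EuclideanSpace ℝ (Fin d)) (hyt1mem : yt1 ∈ Y)
    (hyt1 : IsMinOn (fun y => ⟪gtil, y - yt⟫ + (1 / η) * bregman R y yt) Y yt1) :
    yt1 ∈ {y ∈ Y | ‖y - yt‖ ≤ 2 * η * GtF} ∧
    IsMinOn
      (fun y => (⟪gtil, y - yt⟫ + (1 / (2 * η)) * ⟪y - yt, HR yt (y - yt)⟫)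
        + (1 / η) * (bregman R y yt - (1 / 2) * ⟪y - yt, HR yt (y - yt)⟫))
      {y ∈ Y | ‖y - yt‖ ≤ 2 * η * GtF} yt1 ∧
    ∀ y ∈ {y ∈ Y | ‖y - yt‖ ≤ 2 * η * GtF},
      |bregman R y yt - (1 / 2) * ⟪y - yt, HR yt (y - yt)⟫| ≤ (4 / 3) * G * GtF ^ 3 * η ^ 3 := by
  have hG0 : (0:ℝ) < G := lt_trans one_pos hG
  have hmin := isMinOn_iff.1 hyt1
  -- Part 1: localization
  have hnorm : ‖yt1 - yt‖ ≤ 2 * η * GtF := by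
    have h0 := hmin yt hyt
    have hbyt : bregman R yt yt = 0 := by simp [bregman]
    rw [sub_self, inner_zero_right, hbyt, mul_zero, add_zero] at h0
    have hb := hRsc yt1 hyt1mem yt hyt
    set n := ‖yt1 - yt‖ with hn
    have hn0 : 0 ≤ n := norm_nonneg _
    have hin : -(GtF * n) ≤ ⟪gtil, yt1 - yt⟫ := by
      have h1 := abs_real_inner_le_norm gtil (yt1 - yt)
      rw [← hn] at h1
      have h2 : ‖gtil‖ * n ≤ GtF * n := mul_le_mul_of_nonneg_right hgtil hn0
      have h3 := neg_abs_le (⟪gtil, yt1 - yt⟫)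
      nlinarith
    have h1 : (1 / η) * ((1 / 2) * n ^ 2) ≤ GtF * n := by
      have h4 : (1 / η) * ((1 / 2) * n ^ 2) ≤ (1 / η) * bregman R yt1 yt :=
        mul_le_mul_of_nonneg_left hb (by positivity)
      linarith
    have h2 : (1 / 2) * n ^ 2 ≤ η * (GtF * n) := by
      have h5 := mul_le_mul_of_nonneg_left h1 hη.le
      rwa [← mul_assoc, mul_one_div_cancel hη.ne', one_mul] at h5
    by_contra hlt
    push_neg at hlt
    have hnpos : 0 < n := lt_of_le_of_lt (by positivity) hlt
    nlinarith
  -- Part 3 core estimate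
  have key : ∀ y ∈ Y, |bregman R y yt - (1 / 2) * ⟪y - yt, HR yt (y - yt)⟫|
      ≤ G * ‖y - yt‖ ^ 3 / 6 := by
    intro y hy
    set h : EuclideanSpace ℝ (Fin d) := y - yt with hh
    set c : ℝ → EuclideanSpace ℝ (Fin d) := fun s => yt + s • h with hc
    have hcY : ∀ s ∈ Set.Icc (0:ℝ) 1, c s ∈ Y := by
      intro s hs
      have e : c s = (1 - s) • yt + s • y := by
        simp only [hc, hh, smul_sub, sub_smul, one_smul]; abel
      rw [e]
      have h1s : (0:ℝ) ≤ 1 - s := by linarith [hs.2]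
      exact hYcv hyt hy h1s hs.1 (by ring)
    have hcd : ∀ s : ℝ, HasDerivAt c h s := fun s => by
      simpa [hc] using ((hasDerivAt_id s).smul_const h).const_add yt
    have hcsub : ∀ s s' : ℝ, c s' - c s = (s' - s) • h := by
      intro s s'
      simp only [hc, add_sub_add_left_eq_sub, ← sub_smul]
    set f : ℝ → ℝ := fun s => R (c s) with hf
    set g : ℝ → ℝ := fun s => ⟪h, gradient R (c s)⟫ with hg
    set g' : ℝ → ℝ := fun s => ⟪h, HR (c s) h⟫ with hg'
    set g'' : ℝ → ℝ := fun s => ⟪h, T3 (c s) h h⟫ with hg''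
    have hgD : ∀ s ∈ Set.Icc (0:ℝ) 1, HasDerivAt g (g' s) s := by
      intro s hs
      have h1 : HasDerivAt (fun t => gradient R (c t)) (HR (c s) h) s :=
        (hHR _ (hcY s hs)).comp_hasDerivAt s (hcd s)
      have h2 := (innerSL ℝ h).hasFDerivAt.comp_hasDerivAt s h1
      simpa [hg, hg', Function.comp_def] using h2
    have hg'D : ∀ s ∈ Set.Icc (0:ℝ) 1, HasDerivAt g' (g'' s) s := by
      intro s hs
      have h1 : HasDerivAt (fun t => HR (c t)) (T3 (c s) h) s :=
        (hT3 _ (hcY s hs)).comp_hasDerivAt s (hcd s)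
      have h2 := (ContinuousLinearMap.apply ℝ (EuclideanSpace ℝ (Fin d)) h).hasFDerivAt.comp_hasDerivAt s h1
      have h3 := (innerSL ℝ h).hasFDerivAt.comp_hasDerivAt s h2
      simpa [hg', hg'', Function.comp_def] using h3
    have hg''bd : ∀ s ∈ Set.Icc (0:ℝ) 1, |g'' s| ≤ G * ‖h‖ ^ 3 := by
      intro s hs
      have h1 : |g'' s| ≤ ‖h‖ * ‖T3 (c s) h h‖ := abs_real_inner_le_norm _ _
      have h2 : ‖T3 (c s) h h‖ ≤ ‖T3 (c s) h‖ * ‖h‖ := (T3 (c s) h).le_opNorm h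
      have h3 : ‖T3 (c s) h‖ ≤ ‖T3 (c s)‖ * ‖h‖ := (T3 (c s)).le_opNorm h
      have h4 : ‖T3 (c s)‖ ≤ G := hT3bd _ (hcY s hs)
      calc |g'' s| ≤ ‖h‖ * ‖T3 (c s) h h‖ := h1
        _ ≤ ‖h‖ * (‖T3 (c s) h‖ * ‖h‖) := by gcongr
        _ ≤ ‖h‖ * ((‖T3 (c s)‖ * ‖h‖) * ‖h‖) := by gcongr
        _ ≤ ‖h‖ * ((G * ‖h‖) * ‖h‖) := by gcongr
        _ = G * ‖h‖ ^ 3 := by ring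
    -- sandwich inequality for the values of R along the segment
    have sandwich : ∀ s ∈ Set.Icc (0:ℝ) 1, ∀ s' ∈ Set.Icc (0:ℝ) 1,
        0 ≤ f s' - f s - (s' - s) * g s ∧
        f s' - f s - (s' - s) * g s ≤ (s' - s) * (g s' - g s) := by
      intro s hs s' hs'
      have hzy := hcY s' hs'
      have hwy := hcY s hs
      have e1 : ⟪gradient R (c s), c s' - c s⟫ = (s' - s) * g s := by
        rw [hcsub, real_inner_smul_right, real_inner_comm]
      have e2 : ⟪gradient R (c s'), c s - c s'⟫ = -((s' - s) * g s') := by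
        have := hcsub s' s
        rw [this, real_inner_smul_right, real_inner_comm]
        ring_nf
        rfl
      have hb1 := hRsc (c s') hzy (c s) hwy
      have hb2 := hRsc (c s) hwy (c s') hzy
      rw [bregman, e1] at hb1
      rw [bregman, e2] at hb2
      constructor
      · nlinarith [sq_nonneg ‖c s' - c s‖]
      · nlinarith [sq_nonneg ‖c s - c s'‖]
    have hfD : ∀ s ∈ Set.Icc (0:ℝ) 1, HasDerivWithinAt f (g s) (Set.Icc 0 1) s := by
      intro s hs
      rw [hasDerivWithinAt_iff_isLittleO, Asymptotics.isLittleO_iff]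
      intro ε hε
      have hgc : ContinuousWithinAt g (Set.Icc 0 1) s :=
        (hgD s hs).continuousAt.continuousWithinAt
      have hev : ∀ᶠ s' in nhdsWithin s (Set.Icc 0 1), |g s' - g s| ≤ ε := by
        have := Metric.tendsto_nhds.1 hgc ε hε
        filter_upwards [this] with s' hs'
        rw [Real.dist_eq] at hs'
        exact hs'.le
      filter_upwards [hev, self_mem_nhdsWithin] with s' h1 h2
      have hsw := sandwich s hs s' h2
      rw [Real.norm_eq_abs, Real.norm_eq_abs, smul_eq_mul]
      have h3 : (s' - s) * (g s' - g s) ≤ |s' - s| * |g s' - g s| := by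
        calc (s' - s) * (g s' - g s) ≤ |(s' - s) * (g s' - g s)| := le_abs_self _
        _ = |s' - s| * |g s' - g s| := abs_mul _ _
      have h4 : |s' - s| * |g s' - g s| ≤ |s' - s| * ε :=
        mul_le_mul_of_nonneg_left h1 (abs_nonneg _)
      rw [abs_of_nonneg hsw.1]
      calc f s' - f s - (s' - s) * g s ≤ (s' - s) * (g s' - g s) := hsw.2
        _ ≤ |s' - s| * ε := h3.trans h4
        _ = ε * |s' - s| := mul_comm _ _
    have htay := taylor2_aux f g g' g'' (G * ‖h‖ ^ 3) hfD
      (fun s hs => (hgD s hs).hasDerivWithinAt)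
      (fun s hs => (hg'D s hs).hasDerivWithinAt) hg''bd
    have c0 : c 0 = yt := by simp [hc]
    have c1 : c 1 = y := by simp [hc, hh]
    have e1 : bregman R y yt - (1 / 2) * ⟪y - yt, HR yt (y - yt)⟫ =
        f 1 - f 0 - g 0 - g' 0 / 2 := by
      simp only [hf, hg, hg', c0, c1, bregman, ← hh, real_inner_comm h (gradient R yt)]
      ring
    rw [e1]
    calc |f 1 - f 0 - g 0 - g' 0 / 2| ≤ G * ‖h‖ ^ 3 / 6 := htay
      _ = G * ‖y - yt‖ ^ 3 / 6 := by rw [hh]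
  -- assemble
  have hfun : ∀ z : EuclideanSpace ℝ (Fin d),
      (⟪gtil, z - yt⟫ + (1 / (2 * η)) * ⟪z - yt, HR yt (z - yt)⟫)
        + (1 / η) * (bregman R z yt - (1 / 2) * ⟪z - yt, HR yt (z - yt)⟫) =
      ⟪gtil, z - yt⟫ + (1 / η) * bregman R z yt := by
    intro z
    generalize ⟪gtil, z - yt⟫ = a
    generalize ⟪z - yt, HR yt (z - yt)⟫ = q
    generalize bregman R z yt = b
    field_simp
    try ring
  refine ⟨⟨hyt1mem, hnorm⟩, ?_, ?_⟩
  · rw [isMinOn_iff]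
    intro z hz
    simp only [hfun]
    exact hmin z hz.1
  · rintro z ⟨hzY, hzn⟩
    refine (key z hzY).trans ?_
    have h1 : G * ‖z - yt‖ ^ 3 / 6 ≤ G * (2 * η * GtF) ^ 3 / 6 := by
      gcongr
      try exact norm_nonneg _
    refine h1.trans (le_of_eq ?_)
    ring
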